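/- Let H be a finitely generated group with trivial center, A a finitely generated abelian group, and φ the automorphism of H × A given by φ(h, a) = (ψ(h), α(h)·a), where ψ is an automorphism of H and α : H → A is a homomorphism (i.e. the A-component automorphism γ is the identity). Then Fix φ = (Fix ψ ∩ ker α) × A; in particular, Fix φ is finitely generated if and only if the kernel of the restriction of α to Fix ψ is finitely generated, and in that case Fix ψ is itself finitely generated. -/

import Mathlib

/-- The subgroup of fixed points of an automorphism `φ` of `G`:
`Fix φ = {g ∈ G | φ(g) = g}`. -/
def fixedSubgroup {G : Type*} [Group G] (φ : G ≃* G) : Subgroup G where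
  carrier := {g | φ g = g}
  one_mem' := map_one φ
  mul_mem' := by
    intro a b ha hb
    simp only [Set.mem_setOf_eq, map_mul] at *
    rw [ha, hb]
  inv_mem' := by
    intro a ha
    simp only [Set.mem_setOf_eq, map_inv] at *
    rw [ha]

/-- Finite generation transfers along a group isomorphism. -/
lemma myFgEquiv {G G' : Type*} [Group G] [Group G'] (e : G ≃* G') (h : Group.FG G) :
    Group.FG G' :=
  @Group.fg_of_surjective G _ G' _ h e.toMonoidHom e.surjective

/-- A product of finitely generated groups is finitely generated. -/
lemma myFgProd {G G' : Type*} [Group G] [Group G'] (h : Group.FG G) (h' : Group.FG G') :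
    Group.FG (G × G') := by
  obtain ⟨S, hS, hSfin⟩ := Group.fg_iff.mp h
  obtain ⟨T, hT, hTfin⟩ := Group.fg_iff.mp h'
  refine Group.fg_iff.mpr ⟨(insert 1 S) ×ˢ (insert 1 T), ?_, (hSfin.insert 1).prod (hTfin.insert 1)⟩
  rw [Subgroup.closure_prod (Set.mem_insert 1 S) (Set.mem_insert 1 T)]
  have h1 : Subgroup.closure (insert 1 S) = ⊤ :=
    top_unique (hS ▸ Subgroup.closure_mono (Set.subset_insert 1 S))
  have h2 : Subgroup.closure (insert 1 T) = ⊤ :=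
    top_unique (hT ▸ Subgroup.closure_mono (Set.subset_insert 1 T))
  rw [h1, h2, Subgroup.top_prod_top]

/-- Every subgroup of a finitely generated abelian group is finitely generated. -/
lemma mySubgroupFg {A : Type*} [CommGroup A] (hA : Group.FG A) (B : Subgroup A) :
    Group.FG B := by
  haveI : AddGroup.FG (Additive A) := GroupFG.iff_add_fg.mp hA
  haveI : Module.Finite ℤ (Additive A) := Module.Finite.iff_addGroup_fg.mpr ‹_›
  haveI : IsNoetherian ℤ (Additive A) := isNoetherian_of_isNoetherianRing_of_finite ℤ _
  rw [Group.fg_iff_subgroup_fg, Subgroup.fg_iff_add_fg]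
  exact (Submodule.fg_iff_addSubgroup_fg
    (AddSubgroup.toIntSubmodule (Subgroup.toAddSubgroup B))).mp (IsNoetherian.noetherian _)

/-- If the kernel and the range of a homomorphism are finitely generated,
so is the domain. -/
lemma myFgExtension {G Q : Type*} [Group G] [Group Q] (f : G →* Q)
    (h1 : Group.FG f.ker) (h2 : Group.FG f.range) : Group.FG G := by
  obtain ⟨S, hS, hSfin⟩ := Subgroup.fg_iff _ |>.mp ((Group.fg_iff_subgroup_fg _).mp h1)
  obtain ⟨T, hT, hTfin⟩ := Subgroup.fg_iff _ |>.mp ((Group.fg_iff_subgroup_fg _).mp h2)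
  have hTr : ∀ t ∈ T, ∃ g : G, f g = t := by
    intro t ht
    have : t ∈ f.range := hT ▸ Subgroup.subset_closure ht
    exact this
  choose g hg using hTr
  classical
  let U : Set G := S ∪ (fun t : T => g t t.2) '' Set.univ
  refine Group.fg_iff.mpr ⟨U, ?_, hSfin.union ((Set.finite_univ_iff.mpr ?_).image _)⟩
  · rw [eq_top_iff]
    intro x _
    have hfx : f x ∈ f.range := ⟨x, rfl⟩
    rw [← hT] at hfx
    have himg : T ⊆ f '' ((fun t : T => g t t.2) '' Set.univ) := by
      intro t ht
      exact ⟨g t ht, ⟨⟨⟨t, ht⟩, trivial, rfl⟩, hg t ht⟩⟩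
    have : f x ∈ Subgroup.map f (Subgroup.closure ((fun t : T => g t t.2) '' Set.univ)) := by
      rw [MonoidHom.map_closure]
      exact Subgroup.closure_mono himg hfx
    obtain ⟨c, hc, hfc⟩ := this
    have hker : x * c⁻¹ ∈ f.ker := by
      rw [MonoidHom.mem_ker, map_mul, map_inv, hfc, mul_inv_cancel]
    have hx1 : x * c⁻¹ ∈ Subgroup.closure U :=
      Subgroup.closure_mono Set.subset_union_left (hS ▸ hker)
    have hx2 : c ∈ Subgroup.closure U :=
      Subgroup.closure_mono Set.subset_union_right hc
    simpa using mul_mem hx1 hx2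
  · exact hTfin.to_subtype

/-- For `φ(h,a) = (ψ(h), α(h)·a)` on `H × A` (so `γ = id`),
`Fix φ = (Fix ψ ∩ ker α) × A`; in particular `Fix φ` is finitely generated iff the
kernel of the restriction of `α` to `Fix ψ` is, and in that case `Fix ψ` is finitely
generated. -/
theorem fixed_of_gamma_id {H A : Type*} [Group H] [CommGroup A]
    (hHfg : Group.FG H) (hZ : Subgroup.center H = ⊥) (hA : Group.FG A)
    (ψ : H ≃* H) (α : H →* A) (φ : (H × A) ≃* (H × A))
    (hφ : ∀ (h : H) (a : A), φ (h, a) = (ψ h, α h * a)) :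
    fixedSubgroup φ = (fixedSubgroup ψ ⊓ MonoidHom.ker α).prod (⊤ : Subgroup A) ∧
    (Group.FG ↥(fixedSubgroup φ) ↔
      Group.FG ↥(MonoidHom.ker (α.comp (fixedSubgroup ψ).subtype))) ∧
    (Group.FG ↥(fixedSubgroup φ) → Group.FG ↥(fixedSubgroup ψ)) := by
  set K := fixedSubgroup ψ ⊓ MonoidHom.ker α with hK
  have heq : fixedSubgroup φ = K.prod ⊤ := by
    ext ⟨h, a⟩
    show φ (h, a) = (h, a) ↔ _
    rw [hφ, Prod.ext_iff]
    simp only [Subgroup.mem_prod, Subgroup.mem_inf, MonoidHom.mem_ker, Subgroup.mem_top,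
      and_true, mul_eq_right, hK]
    exact ⟨fun ⟨h1, h2⟩ => ⟨h1, h2⟩, fun ⟨h1, h2⟩ => ⟨h1, h2⟩⟩
  have hker2 : MonoidHom.ker (α.comp (fixedSubgroup ψ).subtype) =
      K.subgroupOf (fixedSubgroup ψ) := by
    ext x
    simp only [MonoidHom.mem_ker, MonoidHom.comp_apply, Subgroup.coe_subtype,
      Subgroup.mem_subgroupOf, hK, Subgroup.mem_inf]
    exact ⟨fun hx => ⟨x.2, hx⟩, fun hx => hx.2⟩
  have e2 : ↥(MonoidHom.ker (α.comp (fixedSubgroup ψ).subtype)) ≃* ↥K :=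
    (MulEquiv.subgroupCongr hker2).trans (Subgroup.subgroupOfEquivOfLe inf_le_left)
  have eφ : ↥(fixedSubgroup φ) ≃* ↥K × ↥(⊤ : Subgroup A) :=
    (MulEquiv.subgroupCongr heq).trans (Subgroup.prodEquiv _ _)
  have hiff : Group.FG ↥(fixedSubgroup φ) ↔
      Group.FG ↥(MonoidHom.ker (α.comp (fixedSubgroup ψ).subtype)) := by
    constructor
    · intro hfg
      have hP : Group.FG (↥K × ↥(⊤ : Subgroup A)) := myFgEquiv eφ hfg
      have hKfg : Group.FG ↥K :=
        @Group.fg_of_surjective _ _ _ _ hP (MonoidHom.fst _ _) Prod.fst_surjective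
      exact myFgEquiv e2.symm hKfg
    · intro hfg
      have hKfg := myFgEquiv e2 hfg
      have hTfg : Group.FG ↥(⊤ : Subgroup A) := myFgEquiv Subgroup.topEquiv.symm hA
      exact myFgEquiv eφ.symm (myFgProd hKfg hTfg)
  refine ⟨heq, hiff, fun hfg => ?_⟩
  exact myFgExtension (α.comp (fixedSubgroup ψ).subtype) (hiff.mp hfg) (mySubgroupFg hA _)
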